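/- Let N be a positive integer, d a positive divisor of N, and z = gcd(d, N/d). Let x and x' be integers with gcd(x, d) = gcd(x', d) = 1 and x congruent to x' modulo z. Then there exist integers r, u, v, w with r*w - N*v*u = 1, r*x + u*d = x', and N*v*x + w*d = d. In other words, (x, d) and (x', d) lie in the same Gamma_0(N)-orbit. -/
import Mathlib


/-- Theorem 2.2 (converse direction): if `x ≡ x' (mod gcd(d, N/d))` with
`gcd(x, d) = gcd(x', d) = 1`, then `(x, d)` and `(x', d)` lie in the same
`Γ₀(N)`-orbit. -/
theorem cusp_equiv_of_mod (N : ℕ) (hN : 0 < N) (d : ℕ) (hd : d ∣ N)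
    (x x' : ℤ) (hx : Int.gcd x (d : ℤ) = 1) (hx' : Int.gcd x' (d : ℤ) = 1)
    (hmod : Int.ModEq ((Nat.gcd d (N / d) : ℤ)) x x') :
    ∃ r u v w : ℤ, r * w - (N : ℤ) * v * u = 1 ∧
      r * x + u * (d : ℤ) = x' ∧ (N : ℤ) * v * x + w * (d : ℤ) = (d : ℤ) := by
  set m : ℤ := ((N / d : ℕ) : ℤ) with hm_def
  have hm : (N : ℤ) = (d : ℤ) * m := by
    rw [hm_def]
    exact_mod_cast (Nat.mul_div_cancel' hd).symm
  set z : ℤ := ((Nat.gcd d (N / d) : ℕ) : ℤ) with hz_def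
  -- Bezout for gcd(d, m) = z
  have hzgcd : Int.gcd (d : ℤ) m = Nat.gcd d (N / d) := by
    rw [hm_def]; exact Int.gcd_natCast_natCast d (N / d)
  set A := Int.gcdA (d : ℤ) m with hA
  set B := Int.gcdB (d : ℤ) m with hB
  have hzAB : z = (d : ℤ) * A + m * B := by
    rw [hz_def, ← hzgcd]; exact Int.gcd_eq_gcd_ab (d : ℤ) m
  -- inverses of x, x' mod d
  set y := Int.gcdA x (d : ℤ) with hy_def
  set s := Int.gcdB x (d : ℤ) with hs_def
  have hy : x * y + (d : ℤ) * s = 1 := by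
    have := Int.gcd_eq_gcd_ab x (d : ℤ)
    rw [hx] at this; exact_mod_cast this.symm
  set y' := Int.gcdA x' (d : ℤ) with hy'_def
  set s' := Int.gcdB x' (d : ℤ) with hs'_def
  have hy2 : x' * y' + (d : ℤ) * s' = 1 := by
    have := Int.gcd_eq_gcd_ab x' (d : ℤ)
    rw [hx'] at this; exact_mod_cast this.symm
  -- z divides x' - x
  obtain ⟨t, ht⟩ : ∃ t : ℤ, x' - x = z * t := hmod.dvd
  set v : ℤ := B * t * y * y' with hv
  set u : ℤ := z * t * (s + s' - (d : ℤ) * s * s') + A * t * y * y' * x * x' with hu_def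
  have hu : (d : ℤ) * u = x' - x - m * v * x * x' := by
    rw [hu_def, hv]
    linear_combination (-1 : ℤ) * ht + (-(t * y * y' * x * x')) * hzAB +
      (z * t * x' * y') * hy + (z * t * (1 - (d : ℤ) * s)) * hy2
  refine ⟨1 + m * v * x', u, v, 1 - m * v * x, ?_, ?_, ?_⟩
  · rw [hm]; linear_combination (-(m * v)) * hu
  · linear_combination hu
  · rw [hm]; ring
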